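/- Let G be a simple graph with n ≥ 1 vertices, m edges, and Laplacian eigenvalues μ₁ ≥ … ≥ μ_{n−1} ≥ μₙ = 0, and let φ be a real number with μ_{n−1} ≤ φ ≤ μ₁. Then (2/n) · | n·Zg(G) + 2mn + (n−1)φ² − 4m(m + φ) |^{1/2} ≤ S_L(G), where Zg(G) is the first Zagreb index of G. -/

import Mathlib

open Finset Polynomial

/-- `μ` is the (weakly decreasing) sequence of eigenvalues of the Laplacian matrix of `G`:
it is antitone and the characteristic polynomial of `L(G)` is `∏ i (x - μ i)`. -/
def IsLapEigSeq {n : ℕ} (G : SimpleGraph (Fin n)) [DecidableRel G.Adj]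
    (μ : Fin n → ℝ) : Prop :=
  (∀ i j : Fin n, i ≤ j → μ j ≤ μ i) ∧
    (G.lapMatrix ℝ).charpoly = ∏ i : Fin n, (X - C (μ i))

section Aux

open Matrix

lemma aux_charpoly_conj {n : ℕ} (U A V : Matrix (Fin n) (Fin n) ℝ) (h : U * V = 1) :
    (U * A * V).charpoly = A.charpoly := by
  have hmap : (U.map C) * (V.map C) = 1 := by
    rw [← Matrix.map_mul, h, Matrix.map_one _ (map_zero C) (map_one C)]
  have hc : charmatrix (U * A * V) = (U.map C) * charmatrix A * (V.map C) := by
    rw [charmatrix, charmatrix]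
    rw [Matrix.mul_sub, Matrix.sub_mul]
    congr 1
    · rw [← (Matrix.scalar_commute (X : ℝ[X]) (fun r => Commute.all _ r) (U.map C)).eq,
        mul_assoc, hmap, mul_one]
    · simp [RingHom.mapMatrix_apply, Matrix.map_mul]
  rw [Matrix.charpoly, Matrix.charpoly, hc, det_mul, det_mul, mul_comm ((U.map C).det),
    mul_assoc, ← det_mul, hmap, det_one, mul_one]

lemma aux_charpoly_diagonal {n : ℕ} (d : Fin n → ℝ) :
    (Matrix.diagonal d).charpoly = ∏ i, (X - C (d i)) := by
  have : charmatrix (Matrix.diagonal d) = Matrix.diagonal (fun i => X - C (d i)) := by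
    ext i j
    by_cases h : i = j <;> simp [h, charmatrix_apply, Matrix.diagonal_apply]
  rw [Matrix.charpoly, this, det_diagonal]

lemma aux_roots_prod {n : ℕ} (f : Fin n → ℝ) :
    (∏ i : Fin n, (X - C (f i))).roots = Finset.univ.val.map f := by
  have h : ∏ i : Fin n, (X - C (f i))
      = ((Finset.univ.val.map f).map (fun a => X - C a)).prod := by
    rw [Multiset.map_map]; rfl
  rw [h, roots_multiset_prod_X_sub_C]

lemma aux_charpoly_herm {n : ℕ} (A : Matrix (Fin n) (Fin n) ℝ) (hA : A.IsHermitian) :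
    A.charpoly = ∏ i, (X - C (hA.eigenvalues i)) := by
  have hU : (hA.eigenvectorUnitary : Matrix (Fin n) (Fin n) ℝ)
      * star (hA.eigenvectorUnitary : Matrix (Fin n) (Fin n) ℝ) = 1 :=
    Matrix.mem_unitaryGroup_iff.mp (hA.eigenvectorUnitary).2
  have hd : Matrix.diagonal (RCLike.ofReal ∘ hA.eigenvalues) = Matrix.diagonal hA.eigenvalues := by
    rw [RCLike.ofReal_real_eq_id]; rfl
  conv_lhs => rw [hA.spectral_theorem, Unitary.conjStarAlgAut_apply]
  rw [aux_charpoly_conj _ _ _ hU, hd, aux_charpoly_diagonal]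

lemma aux_trace_herm {n : ℕ} (A : Matrix (Fin n) (Fin n) ℝ) (hA : A.IsHermitian) :
    A.trace = ∑ i, hA.eigenvalues i ∧ (A * A).trace = ∑ i, hA.eigenvalues i ^ 2 := by
  set U := (hA.eigenvectorUnitary : Matrix (Fin n) (Fin n) ℝ) with hUdef
  set D := Matrix.diagonal hA.eigenvalues with hDdef
  have hsU : star U * U = 1 := Matrix.UnitaryGroup.star_mul_self _
  have hd : Matrix.diagonal (RCLike.ofReal ∘ hA.eigenvalues) = D := by
    rw [RCLike.ofReal_real_eq_id]; rfl
  have hspec : A = U * D * star U := by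
    conv_lhs => rw [hA.spectral_theorem, Unitary.conjStarAlgAut_apply]
    rw [hd]
  constructor
  · conv_lhs => rw [hspec]
    rw [Matrix.trace_mul_comm, ← mul_assoc, hsU, one_mul, hDdef, Matrix.trace_diagonal]
  · conv_lhs => rw [hspec]
    have h2 : (U * D * star U) * (U * D * star U) = U * D * D * star U := by
      rw [mul_assoc (U * D) (star U) _, ← mul_assoc (star U) _ _, ← mul_assoc (star U) _ _,
        hsU, one_mul, ← mul_assoc]
    rw [h2, Matrix.trace_mul_comm, ← mul_assoc (star U) (U * D) D,
      ← mul_assoc (star U) U D, hsU, one_mul, hDdef,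
      Matrix.diagonal_mul_diagonal, Matrix.trace_diagonal]
    exact Finset.sum_congr rfl fun i _ => (sq _).symm

lemma aux_popoviciu {n : ℕ} (a : Fin n → ℝ) (p q : ℝ)
    (h1 : ∀ i, p ≤ a i) (h2 : ∀ i, a i ≤ q) :
    (n : ℝ) * ∑ i, a i ^ 2 - (∑ i, a i) ^ 2 ≤ (n : ℝ) ^ 2 * (q - p) ^ 2 / 4 := by
  have hn0 : (0:ℝ) ≤ n := Nat.cast_nonneg n
  have hkey : ∑ i, a i ^ 2 ≤ (p + q) * ∑ i, a i - (n : ℝ) * (p * q) := by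
    have h0 : (0:ℝ) ≤ ∑ i, (q - a i) * (a i - p) :=
      Finset.sum_nonneg fun i _ => mul_nonneg (by linarith [h2 i]) (by linarith [h1 i])
    have hexp : ∑ i, (q - a i) * (a i - p)
        = (p + q) * ∑ i, a i - (n : ℝ) * (p * q) - ∑ i, a i ^ 2 := by
      have hterm : ∀ i ∈ Finset.univ, (q - a i) * (a i - p)
          = ((p + q) * a i - p * q) - a i ^ 2 := fun i _ => by ring
      rw [Finset.sum_congr rfl hterm, Finset.sum_sub_distrib, Finset.sum_sub_distrib,
        ← Finset.mul_sum, Finset.sum_const, Finset.card_univ, Fintype.card_fin, nsmul_eq_mul]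
    linarith
  nlinarith [sq_nonneg (∑ i, a i - (n : ℝ) * (p + q) / 2),
    mul_le_mul_of_nonneg_left hkey hn0]

end Aux

/-- for `μ_{n-1} ≤ φ ≤ μ₁`,
`(2/n)·|n·Zg(G) + 2mn + (n-1)φ² - 4m(m+φ)|^{1/2} ≤ S_L(G)`. -/
theorem sqrt_abs_bound_phi_le_laplacianSpread
    {n : ℕ} (hn : 1 ≤ n) (G : SimpleGraph (Fin n)) [DecidableRel G.Adj]
    (m : ℕ) (hm : G.edgeFinset.card = m)
    (μ : Fin n → ℝ) (hμ : IsLapEigSeq G μ)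
    (φ : ℝ) (hφ₁ : μ ⟨n - 2, by omega⟩ ≤ φ) (hφ₂ : φ ≤ μ ⟨0, by omega⟩) :
    2 / (n : ℝ) *
        Real.sqrt |(n : ℝ) * (∑ v : Fin n, (G.degree v : ℝ) ^ 2) + 2 * (m : ℝ) * (n : ℝ)
          + ((n : ℝ) - 1) * φ ^ 2 - 4 * (m : ℝ) * ((m : ℝ) + φ)|
      ≤ μ ⟨0, by omega⟩ - μ ⟨n - 2, by omega⟩ := by
  obtain ⟨hmono, hchar⟩ := hμ
  have hPSD := SimpleGraph.posSemidef_lapMatrix ℝ G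
  have hH : (G.lapMatrix ℝ).IsHermitian := hPSD.1
  set ev := hH.eigenvalues with hev
  -- the multiset of `μ`s equals the multiset of eigenvalues
  have hms : Multiset.map μ Finset.univ.val = Multiset.map ev Finset.univ.val := by
    have h1 := aux_roots_prod μ
    have h2 := aux_roots_prod ev
    rw [← hchar] at h1
    rw [← aux_charpoly_herm _ hH] at h2
    rw [← h1, ← h2]
  have hsum_eq : ∀ f : ℝ → ℝ, ∑ i, f (μ i) = ∑ i, f (ev i) := by
    intro f
    have h := congrArg Multiset.sum (congrArg (Multiset.map f) hms)
    simpa [Multiset.map_map, Finset.sum, Function.comp_def] using h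
  obtain ⟨htr1, htr2⟩ := aux_trace_herm _ hH
  -- trace computations for the Laplacian
  have hdiag : ∀ i, G.lapMatrix ℝ i i = (G.degree i : ℝ) := by
    intro i
    simp [SimpleGraph.lapMatrix, SimpleGraph.degMatrix, Matrix.sub_apply]
  have htrL : (G.lapMatrix ℝ).trace = ∑ v : Fin n, (G.degree v : ℝ) := by
    rw [Matrix.trace]
    exact Finset.sum_congr rfl fun i _ => hdiag i
  have hdegsum : ∑ v : Fin n, (G.degree v : ℝ) = 2 * (m : ℝ) := by
    have h := G.sum_degrees_eq_twice_card_edges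
    rw [hm] at h
    exact_mod_cast congrArg (fun k : ℕ => (k : ℝ)) h
  have hLij : ∀ i j, G.lapMatrix ℝ i j
      = (if i = j then (G.degree i : ℝ) else 0) - (if G.Adj i j then 1 else 0) := by
    intro i j
    simp [SimpleGraph.lapMatrix, SimpleGraph.degMatrix, Matrix.sub_apply,
      Matrix.diagonal_apply]
  have htrL2 : ((G.lapMatrix ℝ) * (G.lapMatrix ℝ)).trace
      = (∑ v : Fin n, (G.degree v : ℝ) ^ 2) + ∑ v : Fin n, (G.degree v : ℝ) := by
    have hentry : ∀ i j, G.lapMatrix ℝ i j * G.lapMatrix ℝ j i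
        = (if i = j then (G.degree i : ℝ) ^ 2 else 0) + (if G.Adj i j then 1 else 0) := by
      intro i j
      by_cases h : i = j
      · subst h
        simp [hLij, sq]
      · have h' : ¬ j = i := fun hh => h hh.symm
        rw [hLij, hLij, if_neg h, if_neg h']
        by_cases hadj : G.Adj i j
        · rw [if_pos hadj, if_pos ((G.adj_comm i j).mp hadj), if_neg h]
          norm_num
        · rw [if_neg hadj, if_neg (fun hc => hadj ((G.adj_comm j i).mp hc)), if_neg h]
          norm_num
    rw [Matrix.trace]
    simp only [Matrix.diag_apply, Matrix.mul_apply]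
    have hrow : ∀ i : Fin n, ∑ j, G.lapMatrix ℝ i j * G.lapMatrix ℝ j i
        = (G.degree i : ℝ) ^ 2 + (G.degree i : ℝ) := by
      intro i
      rw [Finset.sum_congr rfl fun j _ => hentry i j, Finset.sum_add_distrib,
        Finset.sum_ite_eq Finset.univ i (fun _ => (G.degree i : ℝ) ^ 2),
        if_pos (Finset.mem_univ i), ← SimpleGraph.degree_eq_sum_if_adj]
    rw [Finset.sum_congr rfl fun i _ => hrow i, Finset.sum_add_distrib]
  -- sums of μ and μ²
  have hSμ : ∑ i, μ i = 2 * (m : ℝ) := by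
    have h := hsum_eq id
    simp only [id] at h
    rw [h, ← htr1, htrL, hdegsum]
  have hQμ : ∑ i, μ i ^ 2 = (∑ v : Fin n, (G.degree v : ℝ) ^ 2) + 2 * (m : ℝ) := by
    have h := hsum_eq (fun x => x ^ 2)
    rw [h, ← htr2, htrL2, hdegsum]
  -- nonnegativity and zero eigenvalue
  have hnonneg : ∀ i, 0 ≤ μ i := by
    intro i
    have hmem : μ i ∈ Multiset.map ev Finset.univ.val :=
      hms ▸ Multiset.mem_map_of_mem μ (Finset.mem_univ i)
    obtain ⟨j, -, hj⟩ := Multiset.mem_map.mp hmem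
    rw [← hj]
    exact hPSD.eigenvalues_nonneg j
  have hdet0 : (G.lapMatrix ℝ).det = 0 := by
    rw [← Matrix.exists_mulVec_eq_zero_iff]
    refine ⟨fun _ => 1, ?_, G.lapMatrix_mulVec_const_eq_zero⟩
    intro hcon
    have := congrFun hcon ⟨0, by omega⟩
    simp at this
  have hev0 : ∃ j, ev j = 0 := by
    have hprod := hH.det_eq_prod_eigenvalues
    rw [hdet0] at hprod
    have hprod' : ∏ i, ev i = 0 := by
      have : ∏ i, ((ev i : ℝ)) = 0 := by exact_mod_cast hprod.symm
      simpa using this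
    obtain ⟨j, -, hj⟩ := Finset.prod_eq_zero_iff.mp hprod'
    exact ⟨j, hj⟩
  have hμlast : μ ⟨n - 1, by omega⟩ = 0 := by
    obtain ⟨j, hj⟩ := hev0
    have hmem : (0 : ℝ) ∈ Multiset.map μ Finset.univ.val := by
      rw [hms]
      exact Multiset.mem_map.mpr ⟨j, Finset.mem_univ j, hj⟩
    obtain ⟨k, -, hk⟩ := Multiset.mem_map.mp hmem
    have h1 : μ ⟨n - 1, by omega⟩ ≤ μ k := by
      refine hmono k ⟨n - 1, by omega⟩ ?_
      rw [Fin.le_def]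
      have := k.isLt
      simp only []
      omega
    rw [hk] at h1
    linarith [hnonneg ⟨n - 1, by omega⟩]
  -- set up the auxiliary sequence
  set l : Fin n := ⟨n - 1, by omega⟩ with hl
  set p : ℝ := μ ⟨n - 2, by omega⟩ with hp
  set q : ℝ := μ ⟨0, by omega⟩ with hq
  set a : Fin n → ℝ := fun i => if i = l then φ else μ i with ha
  have hb1 : ∀ i, p ≤ a i := by
    intro i
    by_cases h : i = l
    · simp only [ha, if_pos h]; exact hφ₁
    · simp only [ha, if_neg h]
      refine hmono i ⟨n - 2, by omega⟩ ?_
      rw [Fin.le_def]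
      have hi := i.isLt
      have : i.val ≠ n - 1 := fun hh => h (by rw [hl]; exact Fin.ext hh)
      simp only []
      omega
  have hb2 : ∀ i, a i ≤ q := by
    intro i
    by_cases h : i = l
    · simp only [ha, if_pos h]; exact hφ₂
    · simp only [ha, if_neg h]
      refine hmono ⟨0, by omega⟩ i ?_
      rw [Fin.le_def]
      simp only []
      omega
  have hal : a l = φ := if_pos rfl
  have herase : ∀ f g : Fin n → ℝ, (∀ i, i ≠ l → f i = g i) →
      ∑ i ∈ Finset.univ.erase l, f i = ∑ i ∈ Finset.univ.erase l, g i := by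
    intro f g hfg
    exact Finset.sum_congr rfl fun i hi => hfg i (Finset.ne_of_mem_erase hi)
  have hS1 : ∑ i, a i = 2 * (m : ℝ) + φ := by
    have e1 : a l + ∑ i ∈ Finset.univ.erase l, a i = ∑ i, a i :=
      Finset.add_sum_erase _ a (Finset.mem_univ l)
    have e2 : μ l + ∑ i ∈ Finset.univ.erase l, μ i = ∑ i, μ i :=
      Finset.add_sum_erase _ μ (Finset.mem_univ l)
    have e3 : ∑ i ∈ Finset.univ.erase l, a i = ∑ i ∈ Finset.univ.erase l, μ i :=
      herase _ _ fun i hi => if_neg hi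
    have hμl : μ l = 0 := hμlast
    rw [hal, e3] at e1
    rw [hμl, zero_add] at e2
    rw [← e1, e2, hSμ]
    ring
  have hS2 : ∑ i, a i ^ 2 = (∑ v : Fin n, (G.degree v : ℝ) ^ 2) + 2 * (m : ℝ) + φ ^ 2 := by
    have e1 : a l ^ 2 + ∑ i ∈ Finset.univ.erase l, a i ^ 2 = ∑ i, a i ^ 2 :=
      Finset.add_sum_erase _ (fun i => a i ^ 2) (Finset.mem_univ l)
    have e2 : μ l ^ 2 + ∑ i ∈ Finset.univ.erase l, μ i ^ 2 = ∑ i, μ i ^ 2 :=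
      Finset.add_sum_erase _ (fun i => μ i ^ 2) (Finset.mem_univ l)
    have e3 : ∑ i ∈ Finset.univ.erase l, a i ^ 2 = ∑ i ∈ Finset.univ.erase l, μ i ^ 2 :=
      herase _ _ fun i hi => by rw [ha]; simp only [if_neg hi]
    have hμl : μ l = 0 := hμlast
    rw [hal, e3] at e1
    rw [hμl] at e2
    rw [← e1, ← hQμ, ← e2]
    ring
  -- rewrite the absolute value
  have hEeq : (n : ℝ) * (∑ v : Fin n, (G.degree v : ℝ) ^ 2) + 2 * (m : ℝ) * (n : ℝ)
      + ((n : ℝ) - 1) * φ ^ 2 - 4 * (m : ℝ) * ((m : ℝ) + φ)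
      = (n : ℝ) * ∑ i, a i ^ 2 - (∑ i, a i) ^ 2 := by
    rw [hS1, hS2]
    ring
  have hE0 : 0 ≤ (n : ℝ) * ∑ i, a i ^ 2 - (∑ i, a i) ^ 2 := by
    have h := sq_sum_le_card_mul_sum_sq (s := (Finset.univ : Finset (Fin n))) (f := a)
    rw [Finset.card_univ, Fintype.card_fin] at h
    linarith
  rw [hEeq, abs_of_nonneg hE0]
  have hqp : 0 ≤ q - p := by
    have := hmono ⟨0, by omega⟩ ⟨n - 2, by omega⟩ (by rw [Fin.le_def]; simp only []; omega)
    rw [hp, hq]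
    linarith
  have hpop := aux_popoviciu a p q hb1 hb2
  have hn' : (0:ℝ) < n := by exact_mod_cast hn
  have hsqrt : Real.sqrt ((n : ℝ) * ∑ i, a i ^ 2 - (∑ i, a i) ^ 2)
      ≤ (n : ℝ) * (q - p) / 2 := by
    have h' : (n : ℝ) * ∑ i, a i ^ 2 - (∑ i, a i) ^ 2 ≤ ((n : ℝ) * (q - p) / 2) ^ 2 := by
      calc (n : ℝ) * ∑ i, a i ^ 2 - (∑ i, a i) ^ 2 ≤ (n : ℝ) ^ 2 * (q - p) ^ 2 / 4 := hpop
      _ = ((n : ℝ) * (q - p) / 2) ^ 2 := by ring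
    calc Real.sqrt ((n : ℝ) * ∑ i, a i ^ 2 - (∑ i, a i) ^ 2)
        ≤ Real.sqrt (((n : ℝ) * (q - p) / 2) ^ 2) := Real.sqrt_le_sqrt h'
      _ = (n : ℝ) * (q - p) / 2 := Real.sqrt_sq (by positivity)
  calc 2 / (n : ℝ) * Real.sqrt ((n : ℝ) * ∑ i, a i ^ 2 - (∑ i, a i) ^ 2)
      ≤ 2 / (n : ℝ) * ((n : ℝ) * (q - p) / 2) := by
        exact mul_le_mul_of_nonneg_left hsqrt (by positivity)
    _ = q - p := by field_simp
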